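/- Let A_0, …, A_{N-1} ∈ S with ‖A_i‖ ≤ K, where any product of m elements of S vanishes, and let 0 < 1 − tγ/N < 1. Then ‖∏_{i=0}^{N-1} ((1 − tγ/N) I + (t/N) A_i)‖ ≤ (1 − tγ/N)^{N} (1 − tγ/N)^{1−m} p_{m−1}(tK), where p_n(z) = Σ_{j=0}^n z^j/j!. -/

import Mathlib

open scoped BigOperators
noncomputable section


lemma expand_prod {R : Type*} [Ring R] [Algebra ℂ R] (α β : ℂ) (l : List R) :
    (l.map fun B => α • (1 : R) + β • B).prod
      = ∑ k ∈ Finset.range (l.length + 1),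
          (α ^ (l.length - k) * β ^ k) • ((l.sublistsLen k).map List.prod).sum := by
  induction l with
  | nil => simp
  | cons B l ih =>
    have hs0 : ((l.sublistsLen 0).map List.prod).sum = (1 : R) := by simp
    have hstop : ((l.sublistsLen (l.length + 1)).map List.prod).sum = (0 : R) := by
      rw [List.sublistsLen_of_length_lt (by omega)]; simp
    rw [List.map_cons, List.prod_cons, ih, add_mul, smul_mul_assoc, one_mul,
      smul_mul_assoc, Finset.mul_sum]
    have hmul : ∀ k, B * ((α ^ (l.length - k) * β ^ k) • ((l.sublistsLen k).map List.prod).sum)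
        = (α ^ (l.length - k) * β ^ k) • (B * ((l.sublistsLen k).map List.prod).sum) := by
      intro k; rw [mul_smul_comm]
    simp only [hmul, smul_smul, Finset.smul_sum]
    rw [List.length_cons]
    conv_rhs => rw [Finset.sum_range_succ']
    have hnew : ∀ k, ((( B :: l).sublistsLen (k+1)).map List.prod).sum
        = ((l.sublistsLen (k+1)).map List.prod).sum
          + B * ((l.sublistsLen k).map List.prod).sum := by
      intro k
      rw [List.sublistsLen_succ_cons, List.map_append, List.sum_append, List.map_map]
      congr 1
      induction (l.sublistsLen k) with
      | nil => simp
      | cons s ss ihs => simp [ihs, mul_add]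
    simp only [hnew, smul_add]
    rw [Finset.sum_add_distrib]
    have h1 : ∀ k ∈ Finset.range (l.length + 1),
        (α ^ (l.length + 1 - (k+1)) * β ^ (k+1)) • (B * ((l.sublistsLen k).map List.prod).sum)
        = (β * (α ^ (l.length - k) * β ^ k)) • (B * ((l.sublistsLen k).map List.prod).sum) := by
      intro k hk
      congr 1
      have : l.length + 1 - (k+1) = l.length - k := by omega
      rw [this]; ring
    rw [Finset.sum_congr rfl h1]
    have h2 : (∑ k ∈ Finset.range (l.length + 1),
        (α ^ (l.length + 1 - (k+1)) * β ^ (k+1)) • ((l.sublistsLen (k+1)).map List.prod).sum)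
        + (α ^ (l.length + 1 - 0) * β ^ 0) • (((B :: l).sublistsLen 0).map List.prod).sum
        = ∑ k ∈ Finset.range (l.length + 1),
            (α * (α ^ (l.length - k) * β ^ k)) • ((l.sublistsLen k).map List.prod).sum := by
      rw [Finset.sum_range_succ]
      have hz : (α ^ (l.length + 1 - (l.length + 1)) * β ^ (l.length + 1))
          • ((l.sublistsLen (l.length + 1)).map List.prod).sum = 0 := by
        rw [hstop, smul_zero]
      rw [hz, add_zero]
      rw [Finset.sum_range_succ']
      congr 1
      · apply Finset.sum_congr rfl
        intro k hk
        simp only [Finset.mem_range] at hk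
        congr 1
        have e1 : l.length + 1 - (k+1) = l.length - k := by omega
        have e2 : l.length - k = (l.length - (k+1)) + 1 := by omega
        rw [e1, e2]; ring
      · simp [hs0, pow_succ']
    rw [add_right_comm, h2]

lemma list_prod_norm_le {R : Type*} [NormedRing R] (hone : ‖(1 : R)‖ ≤ 1) (K : ℝ) (hK0 : 0 ≤ K) :
    ∀ s : List R, (∀ B ∈ s, ‖B‖ ≤ K) → ‖s.prod‖ ≤ K ^ s.length := by
  intro s
  induction s with
  | nil => simpa using hone
  | cons B s ih =>
    intro h
    rw [List.prod_cons, List.length_cons, pow_succ']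
    calc ‖B * s.prod‖ ≤ ‖B‖ * ‖s.prod‖ := norm_mul_le _ _
      _ ≤ K * K ^ s.length := by
          apply mul_le_mul (h B (by simp)) (ih fun B hB => h B (by simp [hB])) (norm_nonneg _)
            hK0

lemma list_norm_sum_le {R : Type*} [SeminormedAddCommGroup R] (C : ℝ) :
    ∀ s : List R, (∀ x ∈ s, ‖x‖ ≤ C) → ‖s.sum‖ ≤ s.length * C := by
  intro s
  induction s with
  | nil => simp
  | cons x s ih =>
    intro h
    rw [List.sum_cons, List.length_cons]
    calc ‖x + s.sum‖ ≤ ‖x‖ + ‖s.sum‖ := norm_add_le _ _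
      _ ≤ C + s.length * C := add_le_add (h x (by simp)) (ih fun y hy => h y (by simp [hy]))
      _ = ((s.length + 1 : ℕ) : ℝ) * C := by push_cast; ring
    
theorem stmt9' {E : Type*} [NormedAddCommGroup E] [InnerProductSpace ℂ E] [CompleteSpace E]
    (S : Set (E →L[ℂ] E)) (m : ℕ) (hm : 1 ≤ m)
    (hS : ∀ l : List (E →L[ℂ] E), (∀ B ∈ l, B ∈ S) → l.length = m → l.prod = 0)
    (N : ℕ) (hN : m ≤ N) (A : Fin N → E →L[ℂ] E) (hA : ∀ i, A i ∈ S)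
    (K t γ : ℝ) (hK : ∀ i, ‖A i‖ ≤ K) (ht : 0 < t) (hγ : 0 < γ)
    (hpos : 0 < 1 - t * γ / N) (hlt : 1 - t * γ / N < 1) :
    ‖(List.ofFn fun i : Fin N =>
        ((1 - t * γ / N : ℝ) : ℂ) • (1 : E →L[ℂ] E) + ((t / N : ℝ) : ℂ) • A i).prod‖ ≤
      (1 - t * γ / N) ^ (N : ℤ) * (1 - t * γ / N) ^ ((1 : ℤ) - (m : ℤ)) *
        ∑ j ∈ Finset.range m, (t * K) ^ j / (j.factorial : ℝ) := by
  have hN0 : 0 < N := lt_of_lt_of_le hm hN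
  set a : ℝ := 1 - t * γ / N with ha
  set b : ℝ := t / N with hb
  have hb0 : 0 < b := div_pos ht (by exact_mod_cast hN0)
  have hK0 : 0 ≤ K := le_trans (norm_nonneg _) (hK ⟨0, hN0⟩)
  set l : List (E →L[ℂ] E) := List.ofFn A with hl
  have hlen : l.length = N := by simp [hl]
  have hmem : ∀ B ∈ l, B ∈ S := by
    intro B hB
    rw [hl, List.mem_ofFn] at hB
    obtain ⟨i, rfl⟩ := hB
    exact hA i
  have hmemK : ∀ B ∈ l, ‖B‖ ≤ K := by
    intro B hB
    rw [hl, List.mem_ofFn] at hB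
    obtain ⟨i, rfl⟩ := hB
    exact hK i
  have hofn : (List.ofFn fun i : Fin N =>
        ((a : ℝ) : ℂ) • (1 : E →L[ℂ] E) + ((b : ℝ) : ℂ) • A i)
      = l.map fun B => ((a : ℝ) : ℂ) • (1 : E →L[ℂ] E) + ((b : ℝ) : ℂ) • B := by
    rw [hl, List.map_ofFn]
    rfl
  rw [hofn, expand_prod, hlen]
  -- kill the terms with k ≥ m
  have hzero : ∀ k, m ≤ k → ((l.sublistsLen k).map List.prod).sum = 0 := by
    intro k hk
    apply List.sum_eq_zero
    intro x hx
    rw [List.mem_map] at hx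
    obtain ⟨s, hs, rfl⟩ := hx
    rw [List.mem_sublistsLen] at hs
    obtain ⟨hsub, hslen⟩ := hs
    have : s.prod = (s.take m).prod * (s.drop m).prod := by
      rw [← List.prod_append, List.take_append_drop]
    rw [this, hS (s.take m) (fun B hB => hmem B (hsub.subset (List.take_subset m s hB)))
      (by rw [List.length_take]; omega), zero_mul]
  have htrunc : ∑ k ∈ Finset.range (N + 1),
        ((((a:ℝ):ℂ)) ^ (N - k) * (((b:ℝ):ℂ)) ^ k) • ((l.sublistsLen k).map List.prod).sum
      = ∑ k ∈ Finset.range m,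
        ((((a:ℝ):ℂ)) ^ (N - k) * (((b:ℝ):ℂ)) ^ k) • ((l.sublistsLen k).map List.prod).sum := by
    apply (Finset.sum_subset (Finset.range_subset_range.2 (by omega)) ?_).symm
    intro k _ hk
    rw [Finset.mem_range, not_lt] at hk
    rw [hzero k hk, smul_zero]
  rw [htrunc]
  -- norm bound on each term
  have hone : ‖(1 : E →L[ℂ] E)‖ ≤ 1 := ContinuousLinearMap.norm_id_le
  have hsk : ∀ k, ‖((l.sublistsLen k).map List.prod).sum‖ ≤ (N.choose k : ℝ) * K ^ k := by
    intro k
    have := list_norm_sum_le (K ^ k) ((l.sublistsLen k).map List.prod) ?_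
    · rwa [List.length_map, List.length_sublistsLen, hlen] at this
    · intro x hx
      rw [List.mem_map] at hx
      obtain ⟨s, hs, rfl⟩ := hx
      rw [List.mem_sublistsLen] at hs
      obtain ⟨hsub, rfl⟩ := hs
      exact list_prod_norm_le hone K hK0 s (fun B hB => hmemK B (hsub.subset hB))
  calc ‖∑ k ∈ Finset.range m,
        ((((a:ℝ):ℂ)) ^ (N - k) * (((b:ℝ):ℂ)) ^ k) • ((l.sublistsLen k).map List.prod).sum‖
      ≤ ∑ k ∈ Finset.range m,
        ‖((((a:ℝ):ℂ)) ^ (N - k) * (((b:ℝ):ℂ)) ^ k) • ((l.sublistsLen k).map List.prod).sum‖ :=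
        norm_sum_le _ _
    _ ≤ ∑ k ∈ Finset.range m, a ^ (N - k) * b ^ k * ((N.choose k : ℝ) * K ^ k) := by
        apply Finset.sum_le_sum
        intro k hk
        rw [norm_smul, norm_mul, norm_pow, norm_pow, Complex.norm_real, Complex.norm_real,
          Real.norm_eq_abs, Real.norm_eq_abs, abs_of_pos hpos, abs_of_pos hb0]
        exact mul_le_mul_of_nonneg_left (hsk k)
          (by positivity)
    _ ≤ ∑ k ∈ Finset.range m, a ^ (N + 1 - m) * ((t * K) ^ k / (k.factorial : ℝ)) := by
        apply Finset.sum_le_sum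
        intro k hk
        rw [Finset.mem_range] at hk
        have h1 : a ^ (N - k) ≤ a ^ (N + 1 - m) := by
          have : N - k = (N + 1 - m) + (m - 1 - k) := by omega
          rw [this, pow_add]
          nth_rewrite 2 [← mul_one (a ^ (N + 1 - m))]
          exact mul_le_mul_of_nonneg_left (pow_le_one₀ hpos.le hlt.le) (by positivity)
        have h2 : b ^ k * ((N.choose k : ℝ) * K ^ k) ≤ (t * K) ^ k / (k.factorial : ℝ) := by
          have hc : (N.choose k : ℝ) ≤ (N : ℝ) ^ k / (k.factorial : ℝ) :=
            Nat.choose_le_pow_div k N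
          have hNpos : (0 : ℝ) < (N : ℝ) ^ k := by positivity
          calc b ^ k * ((N.choose k : ℝ) * K ^ k)
              ≤ b ^ k * (((N:ℝ) ^ k / (k.factorial : ℝ)) * K ^ k) := by
                apply mul_le_mul_of_nonneg_left _ (by positivity)
                exact mul_le_mul_of_nonneg_right hc (by positivity)
            _ = (t * K) ^ k / (k.factorial : ℝ) := by
                rw [hb]
                field_simp
                rw [← mul_pow, div_mul_cancel₀ t (by exact_mod_cast hN0.ne' : (N : ℝ) ≠ 0), ← mul_pow]
        calc a ^ (N - k) * b ^ k * ((N.choose k : ℝ) * K ^ k)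
            ≤ a ^ (N + 1 - m) * (b ^ k * ((N.choose k : ℝ) * K ^ k)) := by
              rw [mul_assoc]
              exact mul_le_mul_of_nonneg_right h1 (by positivity)
          _ ≤ a ^ (N + 1 - m) * ((t * K) ^ k / (k.factorial : ℝ)) :=
              mul_le_mul_of_nonneg_left h2 (by positivity)
    _ = a ^ (N : ℤ) * a ^ ((1 : ℤ) - (m : ℤ)) * ∑ j ∈ Finset.range m,
          (t * K) ^ j / (j.factorial : ℝ) := by
        rw [← Finset.mul_sum]
        congr 1
        rw [← zpow_natCast a (N + 1 - m), ← zpow_add₀ (ne_of_gt hpos)]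
        congr 1
        push_cast [Nat.cast_sub (by omega : m ≤ N + 1)]
        ring

/-- under the hypotheses of the previous bound and $0 < 1 - tγ/N < 1$,
$‖∏_{i=0}^{N-1}((1-tγ/N)I + (t/N)A_i)‖ ≤ (1-tγ/N)^N (1-tγ/N)^{1-m} p_{m-1}(tK)$,
where $p_n(z) = Σ_{j=0}^n z^j/j!$. -/
theorem stmt9 {E : Type*} [NormedAddCommGroup E] [InnerProductSpace ℂ E] [CompleteSpace E]
    (S : Set (E →L[ℂ] E)) (m : ℕ) (hm : 1 ≤ m)
    (hS : ∀ l : List (E →L[ℂ] E), (∀ B ∈ l, B ∈ S) → l.length = m → l.prod = 0)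
    (N : ℕ) (hN : m ≤ N) (A : Fin N → E →L[ℂ] E) (hA : ∀ i, A i ∈ S)
    (K t γ : ℝ) (hK : ∀ i, ‖A i‖ ≤ K) (ht : 0 < t) (hγ : 0 < γ)
    (hpos : 0 < 1 - t * γ / N) (hlt : 1 - t * γ / N < 1) :
    ‖(List.ofFn fun i : Fin N =>
        ((1 - t * γ / N : ℝ) : ℂ) • (1 : E →L[ℂ] E) + ((t / N : ℝ) : ℂ) • A i).prod‖ ≤
      (1 - t * γ / N) ^ (N : ℤ) * (1 - t * γ / N) ^ ((1 : ℤ) - (m : ℤ)) *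
        ∑ j ∈ Finset.range m, (t * K) ^ j / (j.factorial : ℝ) := by
  exact stmt9' S m hm hS N hN A hA K t γ hK ht hγ hpos hlt
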